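/- Let k be a field and a ≤ b real numbers. Then k[a,b) ⊗_gr k(−∞,d) = 0 for any d ∈ ℝ, while k[a,∞) ⊗_gr k(−∞,d) ≅ k(−∞, a+d). -/

import Mathlib

open CategoryTheory

noncomputable section
attribute [local instance] Classical.propDecidable
set_option linter.unusedSectionVars false

variable (R : Type) [Ring R] {P : Type} [Preorder P]

/-- Condition that a subset is order-convex. -/
def IsConvexSet (I : Set P) : Prop := ∀ ⦃x y z : P⦄, x ∈ I → z ∈ I → x ≤ y → y ≤ z → y ∈ I

/-- The value of the interval persistence module at a point. -/
def intervalObj (I : Set P) (a : P) : Submodule R R :=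
  if a ∈ I then (⊤ : Submodule R R) else ⊥

lemma intervalObj_eq_zero {I : Set P} {a : P} (h : a ∉ I) (x : intervalObj R I a) :
    x = 0 := by
  have hx := x.2
  simp only [intervalObj, if_neg h, Submodule.mem_bot] at hx
  exact Subtype.ext hx

/-- The structure map of the interval module between two degrees. -/
def intervalMapAux (I : Set P) (a b : P) :
    (intervalObj R I a) →ₗ[R] (intervalObj R I b) :=
  if h : a ∈ I ∧ b ∈ I then
    Submodule.inclusion (by simp [intervalObj, h.1, h.2])
  else 0

lemma intervalMapAux_coe {I : Set P} {a b : P} (ha : a ∈ I) (hb : b ∈ I)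
    (x : intervalObj R I a) : ((intervalMapAux R I a b x : R)) = (x : R) := by
  simp [intervalMapAux, ha, hb]

lemma intervalMapAux_of_not {I : Set P} {a b : P} (h : ¬(a ∈ I ∧ b ∈ I))
    (x : intervalObj R I a) : intervalMapAux R I a b x = 0 := by
  simp [intervalMapAux, h]

/-- The interval (indicator) persistence module of a convex set `I`,
as a functor from the preorder `P` to `R`-modules. -/
def intervalModule (I : Set P) (hI : IsConvexSet I) : P ⥤ ModuleCat R where
  obj a := ModuleCat.of R (intervalObj R I a)
  map {a b} f := ModuleCat.ofHom (intervalMapAux R I a b)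
  map_id a := by
    ext x
    by_cases h : a ∈ I
    · exact intervalMapAux_coe R h h x
    · rw [intervalObj_eq_zero R h x]
      simp
  map_comp {a b c} f g := by
    ext x
    show (intervalMapAux R I a c x : R) = (intervalMapAux R I b c (intervalMapAux R I a b x) : R)
    by_cases ha : a ∈ I
    · by_cases hc : c ∈ I
      · have hb : b ∈ I := hI ha hc (leOfHom f) (leOfHom g)
        rw [intervalMapAux_coe R ha hc, intervalMapAux_coe R hb hc,
          intervalMapAux_coe R ha hb]
      · rw [intervalMapAux_of_not R (fun h => hc h.2),
          intervalMapAux_of_not R (fun h => hc h.2)]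
    · rw [intervalObj_eq_zero R ha x]
      simp

end

lemma IsConvexSet.of_ordConnected {P : Type} [Preorder P] {s : Set P}
    (h : s.OrdConnected) : IsConvexSet s :=
  fun _ _ _ hx hz hxy hyz => h.out hx hz ⟨hxy, hyz⟩

open CategoryTheory Limits

noncomputable section
variable (k : Type) [Field k]

/-- The index poset `{(s,t) | s + t ≤ r}` for the graded tensor product. -/
abbrev SumLe (r : ℝ) : Type := {p : ℝ × ℝ // p.1 + p.2 ≤ r}

lemma SumLe.le1 {r : ℝ} {p q : SumLe r} (h : p ≤ q) : p.1.1 ≤ q.1.1 := h.1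
lemma SumLe.le2 {r : ℝ} {p q : SumLe r} (h : p ≤ q) : p.1.2 ≤ q.1.2 := h.2

/-- The diagram `(s,t) ↦ M_s ⊗ N_t` over `{(s,t) | s + t ≤ r}` whose colimit is the
degree-`r` piece of the graded tensor product `M ⊗_gr N`. -/
def grDiagram (M N : ℝ ⥤ ModuleCat k) (r : ℝ) : SumLe r ⥤ ModuleCat k where
  obj p := ModuleCat.of k (TensorProduct k (M.obj p.1.1) (N.obj p.1.2))
  map {p q} f :=
    ModuleCat.ofHom (TensorProduct.map (M.map (homOfLE (SumLe.le1 (leOfHom f)))).hom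
      (N.map (homOfLE (SumLe.le2 (leOfHom f)))).hom)
  map_id p := by
    apply ModuleCat.hom_ext
    apply TensorProduct.ext'
    intro x y
    simp [homOfLE_refl]
  map_comp {p q s} f g := by
    rw [show (homOfLE (SumLe.le1 (leOfHom (f ≫ g))) : p.1.1 ⟶ s.1.1) =
        homOfLE (SumLe.le1 (leOfHom f)) ≫ homOfLE (SumLe.le1 (leOfHom g)) from
        Subsingleton.elim _ _,
      show (homOfLE (SumLe.le2 (leOfHom (f ≫ g))) : p.1.2 ⟶ s.1.2) =
        homOfLE (SumLe.le2 (leOfHom f)) ≫ homOfLE (SumLe.le2 (leOfHom g)) from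
        Subsingleton.elim _ _,
      M.map_comp, N.map_comp]
    apply ModuleCat.hom_ext
    exact (TensorProduct.map_comp _ _ _ _)

/-- The structure-map cocone: the degree-`r` diagram mapping into the degree-`r'` colimit. -/
def grCocone (M N : ℝ ⥤ ModuleCat k) {r r' : ℝ} (h : r ≤ r') :
    Cocone (grDiagram k M N r) where
  pt := colimit (grDiagram k M N r')
  ι :=
    { app := fun j => colimit.ι (grDiagram k M N r') ⟨j.1, j.2.trans h⟩
      naturality := fun j j' f => by
        dsimp
        erw [Category.comp_id]
        exact colimit.w (grDiagram k M N r')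
          (homOfLE (show (⟨j.1, j.2.trans h⟩ : SumLe r') ≤ ⟨j'.1, j'.2.trans h⟩ from
            leOfHom f)) }

/-- The graded-module tensor product of one-parameter persistence modules:
`(M ⊗_gr N)_r = colim_{s+t ≤ r} (M_s ⊗ N_t)`, with structure maps induced by
inclusions of index posets. -/
def grTensor (M N : ℝ ⥤ ModuleCat k) : ℝ ⥤ ModuleCat k where
  obj r := colimit (grDiagram k M N r)
  map {r r'} f := colimit.desc (grDiagram k M N r) (grCocone k M N (leOfHom f))
  map_id r := by
    apply colimit.hom_ext
    intro j
    rw [colimit.ι_desc]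
    erw [Category.comp_id]
    rfl
  map_comp {r r' r''} f g := by
    apply colimit.hom_ext
    intro j
    rw [colimit.ι_desc]
    erw [show colimit.ι (grDiagram k M N r) j ≫
        (colimit.desc (grDiagram k M N r) (grCocone k M N (leOfHom f)) ≫
          colimit.desc (grDiagram k M N r') (grCocone k M N (leOfHom g))) =
        (colimit.ι (grDiagram k M N r) j ≫
          colimit.desc (grDiagram k M N r) (grCocone k M N (leOfHom f))) ≫
          colimit.desc (grDiagram k M N r') (grCocone k M N (leOfHom g)) from
      (Category.assoc _ _ _).symm, colimit.ι_desc]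
    rw [show ((grCocone k M N (leOfHom f)).ι.app j : _ ⟶ _) =
        colimit.ι (grDiagram k M N r') ⟨j.1, j.2.trans (leOfHom f)⟩ from rfl]
    erw [colimit.ι_desc]
    rfl

end

noncomputable section AuxProof
open CategoryTheory Limits TensorProduct

variable (k : Type) [Field k]

lemma mem_intervalObj' {P : Type} [Preorder P] {I : Set P} {p : P} (h : p ∈ I) (x : k) :
    x ∈ intervalObj k I p := by simp [intervalObj, h]

/-- Element of an interval module at a supported point. -/
def uel (I : Set ℝ) (s : ℝ) (h : s ∈ I) (x : k) : intervalObj k I s :=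
  ⟨x, mem_intervalObj' k h x⟩

@[simp] lemma uel_coe (I : Set ℝ) (s : ℝ) (h : s ∈ I) (x : k) :
    ((uel k I s h x : intervalObj k I s) : k) = x := rfl

/-- An opaque wrapper for pure tensors, fixing the instance flavor. -/
def tm {I J : Set ℝ} {s t : ℝ} (u : intervalObj k I s) (v : intervalObj k J t) :
    TensorProduct k (intervalObj k I s) (intervalObj k J t) := u ⊗ₜ[k] v

lemma tm_zero_left {I J : Set ℝ} {s t : ℝ} (v : intervalObj k J t) :
    tm k (0 : intervalObj k I s) v = 0 := by simp [tm]

lemma tm_zero_right {I J : Set ℝ} {s t : ℝ} (u : intervalObj k I s) :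
    tm k u (0 : intervalObj k J t) = 0 := by simp [tm]

lemma grT_w_apply {I J : Set ℝ} (hI : IsConvexSet I) (hJ : IsConvexSet J) {r : ℝ}
    {j j' : SumLe r} (hle : j ≤ j')
    (z : (grDiagram k (intervalModule k I hI) (intervalModule k J hJ) r).obj j) :
    colimit.ι (grDiagram k (intervalModule k I hI) (intervalModule k J hJ) r) j'
      ((grDiagram k (intervalModule k I hI) (intervalModule k J hJ) r).map (homOfLE hle) z)
      = colimit.ι (grDiagram k (intervalModule k I hI) (intervalModule k J hJ) r) j z :=
  ConcreteCategory.congr_hom (colimit.w (grDiagram k (intervalModule k I hI)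
    (intervalModule k J hJ) r) (homOfLE hle)) z

/-- Zig: an element at `j` supported at both endpoints comes from any smaller
supported index `j0`. -/
lemma grT_key {I J : Set ℝ} (hI : IsConvexSet I) (hJ : IsConvexSet J) {r : ℝ}
    {j0 j : SumLe r} (hle : j0 ≤ j)
    (hs0 : j0.1.1 ∈ I) (ht0 : j0.1.2 ∈ J) (hs : j.1.1 ∈ I) (ht : j.1.2 ∈ J)
    (u : intervalObj k I j.1.1) (v : intervalObj k J j.1.2) :
    colimit.ι (grDiagram k (intervalModule k I hI) (intervalModule k J hJ) r) j (tm k u v)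
      = colimit.ι (grDiagram k (intervalModule k I hI) (intervalModule k J hJ) r) j0
        (tm k (uel k I j0.1.1 hs0 (u : k)) (uel k J j0.1.2 ht0 (v : k))) := by
  have hz : (grDiagram k (intervalModule k I hI) (intervalModule k J hJ) r).map (homOfLE hle)
      (tm k (uel k I j0.1.1 hs0 (u : k)) (uel k J j0.1.2 ht0 (v : k))) = tm k u v := by
    show TensorProduct.map (intervalMapAux k I j0.1.1 j.1.1) (intervalMapAux k J j0.1.2 j.1.2)
        ((uel k I j0.1.1 hs0 (u : k)) ⊗ₜ[k] (uel k J j0.1.2 ht0 (v : k))) = u ⊗ₜ[k] v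
    rw [TensorProduct.map_tmul]
    congr 1
    · exact Subtype.ext (intervalMapAux_coe k hs0 hs _)
    · exact Subtype.ext (intervalMapAux_coe k ht0 ht _)
  exact (congrArg (fun x => colimit.ι (grDiagram k (intervalModule k I hI)
      (intervalModule k J hJ) r) j x) hz).symm.trans (grT_w_apply k hI hJ hle _)

/-- Zag: pushing up to a dead index kills an element. -/
lemma grT_dead {I J : Set ℝ} (hI : IsConvexSet I) (hJ : IsConvexSet J) {r : ℝ}
    {j j1 : SumLe r} (hle : j ≤ j1) (hdead : j1.1.1 ∉ I ∨ j1.1.2 ∉ J)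
    (u : intervalObj k I j.1.1) (v : intervalObj k J j.1.2) :
    colimit.ι (grDiagram k (intervalModule k I hI) (intervalModule k J hJ) r) j
      (tm k u v) = 0 := by
  have hz : (grDiagram k (intervalModule k I hI) (intervalModule k J hJ) r).map (homOfLE hle)
      (tm k u v) = 0 := by
    show TensorProduct.map (intervalMapAux k I j.1.1 j1.1.1) (intervalMapAux k J j.1.2 j1.1.2)
        (u ⊗ₜ[k] v) = 0
    rw [TensorProduct.map_tmul]
    rcases hdead with hd | hd
    · rw [intervalObj_eq_zero k hd (intervalMapAux k I j.1.1 j1.1.1 u), TensorProduct.zero_tmul]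
    · rw [intervalObj_eq_zero k hd (intervalMapAux k J j.1.2 j1.1.2 v), TensorProduct.tmul_zero]
  rw [← grT_w_apply k hI hJ hle (tm k u v), hz, map_zero]

lemma isZero_colimit_of_ι_zero {r : ℝ} (F : SumLe r ⥤ ModuleCat k)
    (h : ∀ j, colimit.ι F j = 0) : IsZero (colimit F) := by
  have hid : 𝟙 (colimit F) = 0 :=
    colimit.hom_ext (fun j => by rw [Category.comp_id, h, zero_comp])
  have : Subsingleton ↑(colimit F) := ⟨fun x y => by
    calc x = (𝟙 (colimit F)) x := rfl
    _ = (0 : colimit F ⟶ colimit F) x := by rw [hid]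
    _ = 0 := LinearMap.zero_apply x
    _ = (0 : colimit F ⟶ colimit F) y := (LinearMap.zero_apply y).symm
    _ = (𝟙 (colimit F)) y := by rw [hid]
    _ = y := rfl⟩
  exact ModuleCat.isZero_of_subsingleton _

/-- Part 1: every structure map into the colimit of the `[a,b) ⊗ (-∞,d)` diagram is zero. -/
lemma grT_Ico_ι_zero (a b d r : ℝ) (j : SumLe r) :
    colimit.ι (grDiagram k
      (intervalModule k (Set.Ico a b) (.of_ordConnected Set.ordConnected_Ico))
      (intervalModule k (Set.Iio d) (.of_ordConnected Set.ordConnected_Iio)) r) j = 0 := by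
  apply ModuleCat.hom_ext
  apply TensorProduct.ext'
  intro u v
  show colimit.ι (grDiagram k
      (intervalModule k (Set.Ico a b) (.of_ordConnected Set.ordConnected_Ico))
      (intervalModule k (Set.Iio d) (.of_ordConnected Set.ordConnected_Iio)) r) j
      (tm k u v) = 0
  by_cases hs : j.1.1 ∈ Set.Ico a b
  · by_cases ht : j.1.2 ∈ Set.Iio d
    · set t' : ℝ := min j.1.2 (r - b) with ht'
      have h1 : t' ≤ j.1.2 := min_le_left _ _
      have h2 : t' ≤ r - b := min_le_right _ _
      have hj2 := j.2
      have hj0 : j.1.1 + t' ≤ r := by linarith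
      have hj1 : b + t' ≤ r := by linarith
      have hle0 : (⟨(j.1.1, t'), hj0⟩ : SumLe r) ≤ j := ⟨le_refl _, h1⟩
      have hle1 : (⟨(j.1.1, t'), hj0⟩ : SumLe r) ≤ ⟨(b, t'), hj1⟩ := ⟨le_of_lt hs.2, le_refl _⟩
      have ht0 : t' ∈ Set.Iio d := Set.mem_Iio.mpr (lt_of_le_of_lt h1 (Set.mem_Iio.mp ht))
      rw [grT_key k _ _ hle0 hs ht0 hs ht u v]
      exact grT_dead k _ _ hle1 (Or.inl (fun hb => lt_irrefl b hb.2)) _ _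
    · have h0 : v = 0 := intervalObj_eq_zero k ht v
      rw [h0]; erw [tm_zero_right k, map_zero]
  · have h0 : u = 0 := intervalObj_eq_zero k hs u
    rw [h0]; erw [tm_zero_left k, map_zero]

/-- For `r ≥ a + d`, all structure maps into the colimit of the `[a,∞) ⊗ (-∞,d)`
diagram vanish. -/
lemma grT_Ici_ι_zero (a d r : ℝ) (had : ¬ r < a + d) (j : SumLe r) :
    colimit.ι (grDiagram k
      (intervalModule k (Set.Ici a) (.of_ordConnected Set.ordConnected_Ici))
      (intervalModule k (Set.Iio d) (.of_ordConnected Set.ordConnected_Iio)) r) j = 0 := by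
  apply ModuleCat.hom_ext
  apply TensorProduct.ext'
  intro u v
  show colimit.ι (grDiagram k
      (intervalModule k (Set.Ici a) (.of_ordConnected Set.ordConnected_Ici))
      (intervalModule k (Set.Iio d) (.of_ordConnected Set.ordConnected_Iio)) r) j
      (tm k u v) = 0
  by_cases hs : j.1.1 ∈ Set.Ici a
  · by_cases ht : j.1.2 ∈ Set.Iio d
    · have hj2 := j.2
      have hsa : (a : ℝ) ≤ j.1.1 := hs
      have hj0 : a + j.1.2 ≤ r := by linarith
      have hj1 : a + (r - a) ≤ r := by linarith
      have hle0 : (⟨(a, j.1.2), hj0⟩ : SumLe r) ≤ j := ⟨hsa, le_refl _⟩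
      have hle1 : (⟨(a, j.1.2), hj0⟩ : SumLe r) ≤ ⟨(a, r - a), hj1⟩ :=
        ⟨le_refl _, show j.1.2 ≤ r - a by linarith⟩
      rw [grT_key k _ _ hle0 (Set.self_mem_Ici) ht hs ht u v]
      refine grT_dead k _ _ hle1 (Or.inr (fun hd' => ?_)) _ _
      have hda : r - a < d := Set.mem_Iio.mp hd'
      exact had (by linarith)
    · have h0 : v = 0 := intervalObj_eq_zero k ht v
      rw [h0]; erw [tm_zero_right k, map_zero]
  · have h0 : u = 0 := intervalObj_eq_zero k hs u
    rw [h0]; erw [tm_zero_left k, map_zero]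

/-- Multiplication map on a tensor product of two submodules of `k`. -/
def mulLin (A B : Submodule k k) : TensorProduct k A B →ₗ[k] k :=
  TensorProduct.lift (((LinearMap.mul k k).comp A.subtype).compl₂ B.subtype)

/-- Component of the multiplication cocone. -/
def etaApp (a d r : ℝ) (j : SumLe r) :
    (grDiagram k
      (intervalModule k (Set.Ici a) (.of_ordConnected Set.ordConnected_Ici))
      (intervalModule k (Set.Iio d) (.of_ordConnected Set.ordConnected_Iio)) r).obj j ⟶
    (intervalModule k (Set.Iio (a + d)) (.of_ordConnected Set.ordConnected_Iio)).obj r :=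
  if h : r < a + d then
    ModuleCat.ofHom (LinearMap.codRestrict (intervalObj k (Set.Iio (a + d)) r)
      (mulLin k _ _) (fun x => mem_intervalObj' k (Set.mem_Iio.mpr h) _))
  else 0

lemma etaApp_pos (a d : ℝ) {r : ℝ} (h : r < a + d) (j : SumLe r)
    (u : intervalObj k (Set.Ici a) j.1.1) (v : intervalObj k (Set.Iio d) j.1.2) :
    etaApp k a d r j (tm k u v)
      = uel k (Set.Iio (a + d)) r (Set.mem_Iio.mpr h) ((u : k) * (v : k)) := by
  rw [etaApp]; erw [dif_pos h]
  rfl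

lemma etaApp_neg (a d : ℝ) {r : ℝ} (h : ¬ r < a + d) (j : SumLe r) :
    etaApp k a d r j = 0 := by rw [etaApp]; erw [dif_neg h]

/-- For `r < a + d`, upward maps preserve the support of the `[a,∞) × (-∞,d)` diagram. -/
lemma support_up (a d : ℝ) {r : ℝ} (h : r < a + d) {j j' : SumLe r} (hle : j ≤ j')
    (hs : j.1.1 ∈ Set.Ici a) : j'.1.1 ∈ Set.Ici a ∧ j'.1.2 ∈ Set.Iio d := by
  have h1 : a ≤ j'.1.1 := le_trans hs hle.1
  have h2 := j'.2
  exact ⟨h1, by simp only [Set.mem_Iio]; linarith⟩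

def etaCocone (a d r : ℝ) : Cocone (grDiagram k
    (intervalModule k (Set.Ici a) (.of_ordConnected Set.ordConnected_Ici))
    (intervalModule k (Set.Iio d) (.of_ordConnected Set.ordConnected_Iio)) r) where
  pt := (intervalModule k (Set.Iio (a + d)) (.of_ordConnected Set.ordConnected_Iio)).obj r
  ι :=
    { app := etaApp k a d r
      naturality := fun j j' f => by
        rw [show ((Functor.const _).obj _).map f = 𝟙 _ from rfl, Category.comp_id]
        by_cases h : r < a + d
        · apply ModuleCat.hom_ext
          apply TensorProduct.ext'
          intro u v
          show etaApp k a d r j' (tm k (intervalMapAux k (Set.Ici a) j.1.1 j'.1.1 u)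
              (intervalMapAux k (Set.Iio d) j.1.2 j'.1.2 v)) = etaApp k a d r j (tm k u v)
          by_cases hs : j.1.1 ∈ Set.Ici a
          · by_cases ht : j.1.2 ∈ Set.Iio d
            · obtain ⟨hs', ht'⟩ := support_up a d h (leOfHom f) hs
              erw [etaApp_pos k a d h, etaApp_pos k a d h]
              exact congrArg (uel k (Set.Iio (a + d)) r (Set.mem_Iio.mpr h))
                (by erw [intervalMapAux_coe k hs hs', intervalMapAux_coe k ht ht'])
            · have h0 : v = 0 := intervalObj_eq_zero k ht v
              rw [h0]; erw [map_zero, tm_zero_right k, tm_zero_right k, map_zero, map_zero]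
          · have h0 : u = 0 := intervalObj_eq_zero k hs u
            rw [h0]; erw [map_zero, tm_zero_left k, tm_zero_left k, map_zero, map_zero]
        · rw [etaApp_neg k a d h, etaApp_neg k a d h, comp_zero] }

def etaHom (a d r : ℝ) : colimit (grDiagram k
    (intervalModule k (Set.Ici a) (.of_ordConnected Set.ordConnected_Ici))
    (intervalModule k (Set.Iio d) (.of_ordConnected Set.ordConnected_Iio)) r) ⟶
    (intervalModule k (Set.Iio (a + d)) (.of_ordConnected Set.ordConnected_Iio)).obj r :=
  colimit.desc _ (etaCocone k a d r)

/-- The basepoint index for the degree-`r` colimit. -/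
def jbase (a r : ℝ) : SumLe r := ⟨(a, r - a), by show a + (r - a) ≤ r; linarith⟩

def epsHom (a d r : ℝ) :
    (intervalModule k (Set.Iio (a + d)) (.of_ordConnected Set.ordConnected_Iio)).obj r ⟶
    colimit (grDiagram k
      (intervalModule k (Set.Ici a) (.of_ordConnected Set.ordConnected_Ici))
      (intervalModule k (Set.Iio d) (.of_ordConnected Set.ordConnected_Iio)) r) :=
  if h : r < a + d then
    ModuleCat.ofHom ((LinearMap.toSpanSingleton k _
      (colimit.ι (grDiagram k
        (intervalModule k (Set.Ici a) (.of_ordConnected Set.ordConnected_Ici))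
        (intervalModule k (Set.Iio d) (.of_ordConnected Set.ordConnected_Iio)) r)
        (jbase a r)
        (tm k (uel k (Set.Ici a) a Set.self_mem_Ici 1)
          (uel k (Set.Iio d) (r - a) (Set.mem_Iio.mpr (by linarith)) 1)))).comp
      (Submodule.subtype (intervalObj k (Set.Iio (a + d)) r)))
  else 0

lemma epsHom_pos (a d : ℝ) {r : ℝ} (h : r < a + d) (c : intervalObj k (Set.Iio (a + d)) r) :
    epsHom k a d r c = (c : k) • colimit.ι (grDiagram k
      (intervalModule k (Set.Ici a) (.of_ordConnected Set.ordConnected_Ici))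
      (intervalModule k (Set.Iio d) (.of_ordConnected Set.ordConnected_Iio)) r)
      (jbase a r)
      (tm k (uel k (Set.Ici a) a Set.self_mem_Ici 1)
        (uel k (Set.Iio d) (r - a) (Set.mem_Iio.mpr (by linarith)) 1)) := by
  rw [epsHom]; erw [dif_pos h]
  rfl

lemma eta_eps_elt (a d : ℝ) {r : ℝ} (h : r < a + d) (j : SumLe r)
    (u : intervalObj k (Set.Ici a) j.1.1) (v : intervalObj k (Set.Iio d) j.1.2) :
    epsHom k a d r (etaApp k a d r j (tm k u v))
      = colimit.ι (grDiagram k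
          (intervalModule k (Set.Ici a) (.of_ordConnected Set.ordConnected_Ici))
          (intervalModule k (Set.Iio d) (.of_ordConnected Set.ordConnected_Iio)) r) j
          (tm k u v) := by
  rw [etaApp_pos k a d h, epsHom_pos k a d h]
  by_cases hs : j.1.1 ∈ Set.Ici a
  · by_cases ht : j.1.2 ∈ Set.Iio d
    · have hj2 := j.2
      have hsa : (a : ℝ) ≤ j.1.1 := hs
      have hj0 : a + min j.1.2 (r - a) ≤ r := by
        have := min_le_right j.1.2 (r - a); linarith
      have hle0 : (⟨(a, min j.1.2 (r - a)), hj0⟩ : SumLe r) ≤ j := ⟨hsa, min_le_left _ _⟩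
      have hle1 : (⟨(a, min j.1.2 (r - a)), hj0⟩ : SumLe r) ≤ jbase a r :=
        ⟨le_refl _, show min j.1.2 (r - a) ≤ r - a from min_le_right _ _⟩
      have ht0 : min j.1.2 (r - a) ∈ Set.Iio d :=
        Set.mem_Iio.mpr (lt_of_le_of_lt (min_le_left _ _) (Set.mem_Iio.mp ht))
      have htb : (r - a) ∈ Set.Iio d := Set.mem_Iio.mpr (by linarith)
      have e1 := grT_key k (IsConvexSet.of_ordConnected Set.ordConnected_Ici)
        (IsConvexSet.of_ordConnected Set.ordConnected_Iio) hle0 Set.self_mem_Ici ht0 hs ht u v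
      have e2 := grT_key k (IsConvexSet.of_ordConnected Set.ordConnected_Ici)
        (IsConvexSet.of_ordConnected Set.ordConnected_Iio) hle1 Set.self_mem_Ici ht0
        Set.self_mem_Ici htb (uel k (Set.Ici a) a Set.self_mem_Ici (u : k))
        (uel k (Set.Iio d) (r - a) htb (v : k))
      have e3 : ((u : k) * (v : k)) • (tm k (uel k (Set.Ici a) a Set.self_mem_Ici 1)
          (uel k (Set.Iio d) (r - a) htb 1))
          = tm k (uel k (Set.Ici a) a Set.self_mem_Ici (u : k))
            (uel k (Set.Iio d) (r - a) htb (v : k)) := by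
        show ((u : k) * (v : k)) • ((uel k (Set.Ici a) a Set.self_mem_Ici 1)
            ⊗ₜ[k] (uel k (Set.Iio d) (r - a) htb 1))
          = (uel k (Set.Ici a) a Set.self_mem_Ici (u : k))
            ⊗ₜ[k] (uel k (Set.Iio d) (r - a) htb (v : k))
        rw [show uel k (Set.Ici a) a Set.self_mem_Ici (u : k)
            = (u : k) • uel k (Set.Ici a) a Set.self_mem_Ici 1 from
          Subtype.ext (by simp [uel]),
          show uel k (Set.Iio d) (r - a) htb (v : k)
            = (v : k) • uel k (Set.Iio d) (r - a) htb 1 from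
          Subtype.ext (by simp [uel]),
          TensorProduct.smul_tmul_smul]
      exact ((map_smul (colimit.ι (grDiagram k
          (intervalModule k (Set.Ici a) (.of_ordConnected Set.ordConnected_Ici))
          (intervalModule k (Set.Iio d) (.of_ordConnected Set.ordConnected_Iio)) r)
          (jbase a r)).hom ((u : k) * (v : k)) _).symm).trans
        ((congrArg (fun x => colimit.ι (grDiagram k
            (intervalModule k (Set.Ici a) (.of_ordConnected Set.ordConnected_Ici))
            (intervalModule k (Set.Iio d) (.of_ordConnected Set.ordConnected_Iio)) r)
            (jbase a r) x) e3).trans (e2.trans e1.symm))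
    · have h0 : v = 0 := intervalObj_eq_zero k ht v
      rw [h0]; erw [tm_zero_right k, map_zero]
      simp [uel]
  · have h0 : u = 0 := intervalObj_eq_zero k hs u
    rw [h0]; erw [tm_zero_left k, map_zero]
    simp [uel]

lemma eta_eps (a d r : ℝ) : etaHom k a d r ≫ epsHom k a d r = 𝟙 _ := by
  by_cases h : r < a + d
  · apply colimit.hom_ext
    intro j
    rw [Category.comp_id, ← Category.assoc]
    rw [show colimit.ι _ j ≫ etaHom k a d r = (etaCocone k a d r).ι.app j from
      colimit.ι_desc _ _]
    apply ModuleCat.hom_ext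
    apply TensorProduct.ext'
    intro u v
    exact eta_eps_elt k a d h j u v
  · have hz := isZero_colimit_of_ι_zero k _ (grT_Ici_ι_zero k a d r h)
    exact hz.eq_of_src _ _

lemma eps_eta (a d r : ℝ) : epsHom k a d r ≫ etaHom k a d r = 𝟙 _ := by
  by_cases h : r < a + d
  · ext c
    show etaHom k a d r (epsHom k a d r c) = c
    rw [epsHom_pos k a d h c, map_smul]
    have hdesc : colimit.ι (grDiagram k
        (intervalModule k (Set.Ici a) (.of_ordConnected Set.ordConnected_Ici))
        (intervalModule k (Set.Iio d) (.of_ordConnected Set.ordConnected_Iio)) r)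
          (jbase a r) ≫ etaHom k a d r
        = (etaCocone k a d r).ι.app (jbase a r) := colimit.ι_desc _ _
    have hval : etaHom k a d r (colimit.ι (grDiagram k
        (intervalModule k (Set.Ici a) (.of_ordConnected Set.ordConnected_Ici))
        (intervalModule k (Set.Iio d) (.of_ordConnected Set.ordConnected_Iio)) r)
          (jbase a r)
          (tm k (uel k (Set.Ici a) a Set.self_mem_Ici 1)
            (uel k (Set.Iio d) (r - a) (Set.mem_Iio.mpr (by linarith)) 1)))
        = uel k (Set.Iio (a + d)) r (Set.mem_Iio.mpr h) 1 := by
      refine (ConcreteCategory.congr_hom hdesc _).trans ?_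
      refine (etaApp_pos k a d h (jbase a r) _ _).trans ?_
      exact congrArg (uel k (Set.Iio (a + d)) r (Set.mem_Iio.mpr h)) (one_mul 1)
    rw [hval]
    exact Subtype.ext (mul_one _)
  · ext c
    have h0 : c = 0 := intervalObj_eq_zero k (fun hc => h (Set.mem_Iio.mp hc)) c
    rw [h0]
    simp

def etaIso (a d r : ℝ) : colimit (grDiagram k
    (intervalModule k (Set.Ici a) (.of_ordConnected Set.ordConnected_Ici))
    (intervalModule k (Set.Iio d) (.of_ordConnected Set.ordConnected_Iio)) r) ≅
    (intervalModule k (Set.Iio (a + d)) (.of_ordConnected Set.ordConnected_Iio)).obj r where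
  hom := etaHom k a d r
  inv := epsHom k a d r
  hom_inv_id := eta_eps k a d r
  inv_hom_id := eps_eta k a d r

lemma eta_natural (a d : ℝ) {r r' : ℝ} (f : r ⟶ r') :
    (grTensor k
      (intervalModule k (Set.Ici a) (.of_ordConnected Set.ordConnected_Ici))
      (intervalModule k (Set.Iio d) (.of_ordConnected Set.ordConnected_Iio))).map f ≫
        etaHom k a d r' =
    etaHom k a d r ≫
      (intervalModule k (Set.Iio (a + d)) (.of_ordConnected Set.ordConnected_Iio)).map f := by
  apply colimit.hom_ext
  intro j
  have hrr : r ≤ r' := leOfHom f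
  erw [← Category.assoc, ← Category.assoc]
  rw [show colimit.ι _ j ≫ (grTensor k
      (intervalModule k (Set.Ici a) (.of_ordConnected Set.ordConnected_Ici))
      (intervalModule k (Set.Iio d) (.of_ordConnected Set.ordConnected_Iio))).map f
      = colimit.ι (grDiagram k
        (intervalModule k (Set.Ici a) (.of_ordConnected Set.ordConnected_Ici))
        (intervalModule k (Set.Iio d) (.of_ordConnected Set.ordConnected_Iio)) r')
        ⟨j.1, j.2.trans hrr⟩ from colimit.ι_desc _ _]
  rw [etaHom]; erw [colimit.ι_desc]; rw [etaHom]; erw [colimit.ι_desc]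
  show etaApp k a d r' ⟨j.1, j.2.trans hrr⟩
    = etaApp k a d r j ≫
      (intervalModule k (Set.Iio (a + d)) (.of_ordConnected Set.ordConnected_Iio)).map f
  by_cases h' : r' < a + d
  · have h : r < a + d := lt_of_le_of_lt hrr h'
    apply ModuleCat.hom_ext
    apply TensorProduct.ext'
    intro u v
    show etaApp k a d r' ⟨j.1, j.2.trans hrr⟩ (tm k u v)
      = intervalMapAux k (Set.Iio (a + d)) r r' (etaApp k a d r j (tm k u v))
    erw [etaApp_pos k a d h', etaApp_pos k a d h]
    exact (Subtype.ext (by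
      rw [intervalMapAux_coe k (Set.mem_Iio.mpr h) (Set.mem_Iio.mpr h')]
      simp [uel])).symm
  · rw [etaApp_neg k a d h']
    by_cases h : r < a + d
    · symm
      apply ModuleCat.hom_ext
      apply TensorProduct.ext'
      intro u v
      show intervalMapAux k (Set.Iio (a + d)) r r' (etaApp k a d r j (tm k u v)) = 0
      erw [etaApp_pos k a d h,
        intervalMapAux_of_not k (fun hc => h' (Set.mem_Iio.mp hc.2))]
    · rw [etaApp_neg k a d h, zero_comp]; rfl

end AuxProof


open CategoryTheory in
/-- `k[a,b) ⊗_gr k(−∞,d) = 0` for a bounded-below-and-above interval `[a,b)`, while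
`k[a,∞) ⊗_gr k(−∞,d) ≅ k(−∞, a+d)`. -/
theorem grTensor_with_lower_interval (k : Type) [Field k] (a b d : ℝ) (hab : a ≤ b) :
    Limits.IsZero
      (grTensor k (intervalModule k (Set.Ico a b) (.of_ordConnected Set.ordConnected_Ico))
        (intervalModule k (Set.Iio d) (.of_ordConnected Set.ordConnected_Iio))) ∧
    Nonempty
      (grTensor k (intervalModule k (Set.Ici a) (.of_ordConnected Set.ordConnected_Ici))
          (intervalModule k (Set.Iio d) (.of_ordConnected Set.ordConnected_Iio)) ≅
        intervalModule k (Set.Iio (a + d)) (.of_ordConnected Set.ordConnected_Iio)) := by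
  
  constructor
  · apply Functor.isZero
    intro r
    exact isZero_colimit_of_ι_zero k _ (grT_Ico_ι_zero k a b d r)
  · exact ⟨NatIso.ofComponents (etaIso k a d) (fun f => eta_natural k a d f)⟩
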